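/- Let A be a unital C*-algebra, let B be a C*-algebra, and let T : A → B be a continuous linear map which is a triple homomorphism at the unit 1 of A. Then T is a triple homomorphism, i.e., T({a,b,c}) = {T(a),T(b),T(c)} for all a, b, c ∈ A. Furthermore, e := T(1) is a partial isometry and T is a Jordan *-homomorphism into the Peirce-2 subspace of e, that is, T(x*) = e T(x)* e for all x ∈ A and T((ab + ba)/2) = (1/2)(T(a) e* T(b) + T(b) e* T(a)) for all a, b ∈ A. -/

import Mathlib

/-- The C*-triple product `{a,b,c} = (1/2)(a b* c + c b* a)`. -/
noncomputable def trip {R : Type*} [NonUnitalRing R] [Module ℂ R] [Star R] (a b c : R) : R :=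
  (2 : ℂ)⁻¹ • (a * star b * c + c * star b * a)

namespace Stmt19Aux

open NormedSpace Filter

section scalars
variable {M : Type*} [AddCommMonoid M] [Module ℂ M]

lemma halfsum (W : M) : (2:ℂ)⁻¹ • (W + W) = W := by
  rw [← two_smul ℂ, smul_smul, inv_mul_cancel₀ two_ne_zero, one_smul]

lemma half_eq {u v W : M} (h : (2:ℂ)⁻¹ • (u + v) = W) : u + v = W + W := by
  have := congrArg (fun z : M => (2:ℂ) • z) h
  simpa [smul_smul, mul_inv_cancel₀ (two_ne_zero (α := ℂ)), two_smul] using this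

end scalars

section scalars2
variable {M : Type*} [AddCommGroup M] [Module ℂ M]

lemma two_cancel {a b : M} (h : a + a = b + b) : a = b := by
  have h2 : (2:ℂ) • a = (2:ℂ) • b := by rw [two_smul, two_smul]; exact h
  exact smul_right_injective M two_ne_zero h2

lemma four_cancel {a b : M} (h : a + a + (a + a) = b + b + (b + b)) : a = b :=
  two_cancel (two_cancel (by abel_nf; abel_nf at h; exact h))

end scalars2

section algebra
variable {B : Type*} [NonUnitalRing B] [StarRing B]

lemma sandwich_p (e z : B) (hpi : e * star e * e = e) :
    e * star e * (e * z * e) = e * z * e := by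
  have h : e * star e * (e * z * e) = (e * star e * e) * z * e := by noncomm_ring
  rw [h, hpi]

lemma sandwich_q (e z : B) (hpi : e * star e * e = e) :
    (e * z * e) * (star e * e) = e * z * e := by
  have h : (e * z * e) * (star e * e) = e * z * (e * star e * e) := by noncomm_ring
  rw [h, hpi]

lemma peirce_swap (e z w : B) (hpi : e * star e * e = e)
    (hwp : e * star e * w = w) (hwq : w * (star e * e) = w)
    (hM : z * star e * e + e * star e * z = w + w) :
    e * star e * z = z * (star e * e) := by
  have hpv : e * star e * (e * star e * z) = e * star e * z := by
    have h : e * star e * (e * star e * z) = ((e * star e * e) * star e) * z := by noncomm_ring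
    rw [h, hpi]
  have hpu : e * star e * (z * star e * e) = z * star e * e := by
    have h := congrArg (fun y => e * star e * y) hM
    simp only [mul_add] at h
    rw [hpv, hwp] at h
    rw [← hM] at h
    exact add_right_cancel h
  have huq : (z * star e * e) * (star e * e) = z * star e * e := by
    have h : (z * star e * e) * (star e * e) = z * star e * (e * star e * e) := by noncomm_ring
    rw [h, hpi]
  have hvq : (e * star e * z) * (star e * e) = e * star e * z := by
    have h := congrArg (fun y => y * (star e * e)) hM
    simp only [add_mul] at h
    rw [huq, hwq] at h
    rw [← hM] at h
    exact add_left_cancel h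
  calc e * star e * z = (e * star e * z) * (star e * e) := hvq.symm
    _ = e * star e * (z * star e * e) := by noncomm_ring
    _ = z * star e * e := hpu
    _ = z * (star e * e) := by rw [mul_assoc]

lemma compress' (p q e X Y K : B)
    (hpp : p * p = p) (hpe : p * e = e) (heq : e * q = e)
    (hX : p * X = X * q) (hY : p * Y = Y * q)
    (hkey : X * K * Y + Y * K * X = e + e) :
    (X - p * X) * K * (Y - p * Y) + (Y - p * Y) * K * (X - p * X) = 0 := by
  have h1 : (X - p * X) * K * (Y - p * Y)
      = X * K * Y - p * (X * K * Y) - (X * K * Y) * q + p * ((X * K * Y) * q) := by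
    rw [hY]; noncomm_ring
  have h2 : (Y - p * Y) * K * (X - p * X)
      = Y * K * X - p * (Y * K * X) - (Y * K * X) * q + p * ((Y * K * X) * q) := by
    rw [hX]; noncomm_ring
  rw [h1, h2]
  have h3 : X * K * Y - p * (X * K * Y) - (X * K * Y) * q + p * ((X * K * Y) * q)
      + (Y * K * X - p * (Y * K * X) - (Y * K * X) * q + p * ((Y * K * X) * q))
      = (X * K * Y + Y * K * X) - p * (X * K * Y + Y * K * X)
        - (X * K * Y + Y * K * X) * q + p * ((X * K * Y + Y * K * X) * q) := by
    noncomm_ring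
  rw [h3, hkey]
  rw [mul_add p e e, hpe, add_mul e e q, heq, mul_add p e e, hpe]
  abel

lemma compress (e X Y : B)
    (he : e * star e * e = e)
    (hX : e * star e * X = X * (star e * e))
    (hY : e * star e * Y = Y * (star e * e))
    (hkey : X * star X * Y + Y * star X * X = e + e) :
    (X - e * star e * X) * star (X - e * star e * X) * (Y - e * star e * Y)
      + (Y - e * star e * Y) * star (X - e * star e * X) * (X - e * star e * X) = 0 := by
  have hps : star (e * star e) = e * star e := by rw [star_mul, star_star]
  have hpp : (e * star e) * (e * star e) = e * star e := by
    have h : e * star e * (e * star e) = (e * star e * e) * star e := by noncomm_ring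
    rw [h, he]
  have heq : e * (star e * e) = e := by rw [← mul_assoc, he]
  have hpX0 : (e * star e) * (X - e * star e * X) = 0 := by
    rw [mul_sub, ← mul_assoc, hpp, sub_self]
  have hpY0 : (e * star e) * (Y - e * star e * Y) = 0 := by
    rw [mul_sub, ← mul_assoc, hpp, sub_self]
  have hstar : star (X - e * star e * X) = star X - star X * (e * star e) := by
    rw [star_sub, star_mul, hps]
  rw [hstar]
  have r1 : (X - e * star e * X) * (star X - star X * (e * star e)) * (Y - e * star e * Y)
      = (X - e * star e * X) * star X * (Y - e * star e * Y) := by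
    have expand : (X - e * star e * X) * (star X - star X * (e * star e)) * (Y - e * star e * Y)
        = (X - e * star e * X) * star X * (Y - e * star e * Y)
          - (X - e * star e * X) * star X * ((e * star e) * (Y - e * star e * Y)) := by
      noncomm_ring
    rw [expand, hpY0, mul_zero, sub_zero]
  have r2 : (Y - e * star e * Y) * (star X - star X * (e * star e)) * (X - e * star e * X)
      = (Y - e * star e * Y) * star X * (X - e * star e * X) := by
    have expand : (Y - e * star e * Y) * (star X - star X * (e * star e)) * (X - e * star e * X)
        = (Y - e * star e * Y) * star X * (X - e * star e * X)
          - (Y - e * star e * Y) * star X * ((e * star e) * (X - e * star e * X)) := by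
      noncomm_ring
    rw [expand, hpX0, mul_zero, sub_zero]
  rw [r1, r2]
  exact compress' (e * star e) (star e * e) e X Y (star X) hpp he heq hX hY hkey

lemma jordan_triple (e α β γ : B)
    (he : e * star e * e = e)
    (ha1 : α * star e * e = α) (ha2 : e * star e * α = α)
    (hc1 : γ * star e * e = γ) (hc2 : e * star e * γ = γ) :
    α * star e * ((e * star β * e) * star e * γ + γ * star e * (e * star β * e))
      + ((e * star β * e) * star e * γ + γ * star e * (e * star β * e)) * star e * α
      + (γ * star e * (α * star e * (e * star β * e) + (e * star β * e) * star e * α)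
        + (α * star e * (e * star β * e) + (e * star β * e) * star e * α) * star e * γ)
      - ((e * star β * e) * star e * (α * star e * γ + γ * star e * α)
        + (α * star e * γ + γ * star e * α) * star e * (e * star β * e))
    = (α * star β * γ + γ * star β * α) + (α * star β * γ + γ * star β * α) := by
  have A1 : ∀ W, α * (star e * (e * W)) = α * W := fun W => by
    rw [← mul_assoc, ← mul_assoc, ha1]
  have A2 : α * (star e * e) = α := by rw [← mul_assoc, ha1]
  have G1 : ∀ W, γ * (star e * (e * W)) = γ * W := fun W => by
    rw [← mul_assoc, ← mul_assoc, hc1]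
  have G2 : γ * (star e * e) = γ := by rw [← mul_assoc, hc1]
  have Pa : e * (star e * α) = α := by rw [← mul_assoc, ha2]
  have PaW : ∀ W, e * (star e * (α * W)) = α * W := fun W => by
    rw [← mul_assoc, ← mul_assoc, ha2]
  have Pc : e * (star e * γ) = γ := by rw [← mul_assoc, hc2]
  have PcW : ∀ W, e * (star e * (γ * W)) = γ * W := fun W => by
    rw [← mul_assoc, ← mul_assoc, hc2]
  have Pe : e * (star e * e) = e := by rw [← mul_assoc, he]
  have PeW : ∀ W, e * (star e * (e * W)) = e * W := fun W => by
    rw [← mul_assoc, ← mul_assoc, he]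
  simp only [mul_add, add_mul, mul_assoc]
  simp only [A1, A2, G1, G2, Pa, PaW, Pc, PcW, Pe, PeW]
  abel

end algebra

section derivs
variable {B : Type*} [NonUnitalCStarAlgebra B]

lemma mulDeriv {f g : ℝ → B} {f' g' : B} {t : ℝ} (hf : HasDerivAt f f' t)
    (hg : HasDerivAt g g' t) :
    HasDerivAt (fun s => f s * g s) (f t * g' + f' * g t) t := by
  simpa using (ContinuousLinearMap.mul ℝ B).hasDerivAt_of_bilinear (fun _ => hf) (fun _ => hg)

lemma constDeriv {F : ℝ → B} {c : B} (h : ∀ t, F t = c) {D : B} {t : ℝ}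
    (hF : HasDerivAt F D t) : D = 0 :=
  hF.unique ((hasDerivAt_const t c).congr_of_eventuallyEq (Filter.Eventually.of_forall h))

lemma starDeriv {f : ℝ → B} {f' : B} {t : ℝ} (hf : HasDerivAt f f' t) :
    HasDerivAt (fun s => star (f s)) (star f') t :=
  ((starL' ℝ : B ≃L[ℝ] B).toContinuousLinearMap.hasFDerivAt).comp_hasDerivAt t hf

lemma leftMulDeriv (c : B) {f : ℝ → B} {f' : B} {t : ℝ} (hf : HasDerivAt f f' t) :
    HasDerivAt (fun s => c * f s) (c * f') t := by
  simpa [Function.comp_def] using ((ContinuousLinearMap.mul ℝ B c).hasFDerivAt).comp_hasDerivAt t hf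

lemma slopeTendsto {φ : ℝ → B} {d : B} (h : HasDerivAt φ d 0) (h0 : φ 0 = 0) :
    Tendsto (fun t : ℝ => t⁻¹ • φ t) (nhdsWithin 0 {(0:ℝ)}ᶜ) (nhds d) := by
  have h2 := hasDerivAt_iff_tendsto_slope.mp h
  refine h2.congr (fun t => ?_)
  simp [slope, h0]

end derivs

section expTools
variable {A : Type*} [CStarAlgebra A]

lemma expE0 (x : A) : exp ((0:ℝ) • x) = 1 := by rw [zero_smul, exp_zero]

lemma expEd (x : A) (t : ℝ) :
    HasDerivAt (fun s : ℝ => exp (s • x)) (exp (t • x) * x) t :=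
  hasDerivAt_exp_smul_const x t

lemma expEstar (x : A) (t : ℝ) : star (exp (t • x)) = exp (t • star x) := by
  rw [star_exp, star_smul, star_trivial]

lemma expsum (h : A) (a b : ℝ) : exp (a • h) * exp (b • h) = exp ((a + b) • h) := by
  rw [add_smul]
  let +nondep : NormedAlgebra ℚ A := .restrictScalars ℚ ℂ A
  exact (exp_add_of_commute (((Commute.refl h).smul_left a).smul_right b)).symm

lemma exp3 (h : A) (t : ℝ) :
    exp (t • h) * exp (t • h) * exp (t • ((-2:ℝ) • h)) = 1 := by
  rw [smul_smul, expsum]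
  rw [show exp ((t + t) • h) * exp ((t * -2) • h) = exp ((t + t + t * -2) • h) from
    expsum h (t+t) (t*-2)]
  rw [show t + t + t * -2 = 0 by ring, zero_smul, exp_zero]

lemma exp3' (h : A) (t : ℝ) :
    exp (t • ((-2:ℝ) • h)) * exp (t • h) * exp (t • h) = 1 := by
  rw [smul_smul]
  rw [show exp ((t * -2) • h) * exp (t • h) = exp ((t * -2 + t) • h) from expsum h _ _]
  rw [show exp ((t * -2 + t) • h) * exp (t • h) = exp ((t * -2 + t + t) • h) from
    expsum h _ _]
  rw [show t * -2 + t + t = 0 by ring, zero_smul, exp_zero]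

lemma expEmulneg (x : A) (t : ℝ) : exp (t • x) * exp (t • (-x)) = 1 := by
  let +nondep : NormedAlgebra ℚ A := .restrictScalars ℚ ℂ A
  rw [← exp_add_of_commute (((Commute.refl x).neg_right).smul_left t |>.smul_right t)]
  rw [← smul_add, add_neg_cancel, smul_zero, exp_zero]

lemma expEmulneg' (x : A) (t : ℝ) : exp (t • (-x)) * exp (t • x) = 1 := by
  let +nondep : NormedAlgebra ℚ A := .restrictScalars ℚ ℂ A
  rw [← exp_add_of_commute (((Commute.refl x).neg_left).smul_left t |>.smul_right t)]
  rw [← smul_add, neg_add_cancel, smul_zero, exp_zero]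

end expTools

end Stmt19Aux

set_option maxHeartbeats 2000000 in
open NormedSpace Filter Stmt19Aux in
/-- A continuous linear map `T : A → B` between C*-algebras (`A` unital) which is a triple
homomorphism at the unit is a triple homomorphism; moreover `e := T(1)` is a partial isometry
and `T` is a Jordan `*`-homomorphism into the Peirce-2 subspace of `e`:
`T(x*) = e T(x)* e` and `T((ab+ba)/2) = (1/2)(T(a) e* T(b) + T(b) e* T(a))`. -/
theorem stmt19 {A B : Type*} [CStarAlgebra A] [NonUnitalCStarAlgebra B] (T : A →ₗ[ℂ] B)
    (hcont : Continuous T)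
    (hT : ∀ a b c : A, trip a b c = 1 → trip (T a) (T b) (T c) = T 1) :
    (∀ a b c : A, T (trip a b c) = trip (T a) (T b) (T c)) ∧
    T 1 * star (T 1) * T 1 = T 1 ∧
    (∀ x : A, T (star x) = T 1 * star (T x) * T 1) ∧
    (∀ a b : A, T ((2 : ℂ)⁻¹ • (a * b + b * a)) =
      (2 : ℂ)⁻¹ • (T a * star (T 1) * T b + T b * star (T 1) * T a)) := by
  set e := T 1 with he
  have hTEd : ∀ (y : A) (t : ℝ),
      HasDerivAt (fun s : ℝ => T (exp (s • y))) (T (exp (t • y) * y)) t := fun y t =>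
    (((⟨T, hcont⟩ : A →L[ℂ] B).restrictScalars ℝ).hasFDerivAt).comp_hasDerivAt t (expEd y t)
  -- e is a partial isometry
  have hpi : e * star e * e = e := by
    have h := hT 1 1 1 (by rw [trip]; simpa using halfsum (1 : A))
    rw [trip] at h
    have h2 := half_eq h
    simpa [he] using two_cancel h2
  -- the first-order identity (M)
  have keyM : ∀ (x : A) (t : ℝ),
      T (exp (t • x)) * star (T (exp (t • (-star x)))) * e
        + e * star (T (exp (t • (-star x)))) * T (exp (t • x)) = e + e := by
    intro x t
    have hsb : star (exp (t • (-star x))) = exp (t • (-x)) := by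
      rw [expEstar]; congr 1; rw [star_neg, star_star]
    have h := hT (exp (t • x)) (exp (t • (-star x))) 1 ?_
    · rw [trip] at h
      have h2 := half_eq h
      rw [← he] at h2
      simpa using h2
    · rw [trip, hsb]
      have p1 : exp (t • x) * exp (t • (-x)) * 1 = 1 := by
        rw [mul_one, expEmulneg]
      have p2 : (1:A) * exp (t • (-x)) * exp (t • x) = 1 := by
        rw [one_mul, expEmulneg']
      rw [p1, p2]
      exact halfsum 1
  have hMd : ∀ x : A, T x * star e * e + e * star e * T x
      = e * star (T (star x)) * e + e * star (T (star x)) * e := by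
    intro x
    have hfd0 : HasDerivAt (fun s : ℝ => T (exp (s • x))) (T x) 0 := by
      simpa [expE0] using hTEd x 0
    have hgd0 : HasDerivAt (fun s : ℝ => star (T (exp (s • (-star x)))))
        (-star (T (star x))) 0 := by
      simpa [expE0, map_neg] using starDeriv (hTEd (-star x) 0)
    have h1 := mulDeriv (mulDeriv hfd0 hgd0) (hasDerivAt_const (0:ℝ) e)
    have h2 := mulDeriv (leftMulDeriv e hgd0) hfd0
    have hval := constDeriv (keyM x) (h1.add h2)
    simp only [expE0, ← he, mul_one, one_mul, mul_zero, zero_add] at hval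
    rw [← sub_eq_zero]
    refine Eq.trans ?_ hval
    noncomm_ring
  -- Peirce facts:  e e* (Tx) = (Tx) e* e
  have hpq : ∀ x : A, e * star e * T x = T x * (star e * e) := fun x =>
    peirce_swap e (T x) (e * star (T (star x)) * e) hpi
      (sandwich_p e (star (T (star x))) hpi) (sandwich_q e (star (T (star x))) hpi) (hMd x)
  -- killing the Peirce 0/1 part on selfadjoint elements
  have hT0sa : ∀ h : A, star h = h → T h = e * star e * T h := by
    intro h hsa
    have keyP : ∀ t : ℝ,
        T (exp (t • h)) * star (T (exp (t • h))) * T (exp (t • ((-2:ℝ) • h)))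
          + T (exp (t • ((-2:ℝ) • h))) * star (T (exp (t • h))) * T (exp (t • h))
          = e + e := by
      intro t
      have hb : star (exp (t • h)) = exp (t • h) := by rw [expEstar, hsa]
      have hkey := hT (exp (t • h)) (exp (t • h)) (exp (t • ((-2:ℝ) • h))) ?_
      · rw [trip] at hkey
        exact half_eq hkey
      · rw [trip, hb, exp3, exp3']
        exact halfsum 1
    have hcomp : ∀ t : ℝ,
        (T (exp (t • h)) - e * star e * T (exp (t • h)))
            * star (T (exp (t • h)) - e * star e * T (exp (t • h)))
            * (T (exp (t • ((-2:ℝ) • h))) - e * star e * T (exp (t • ((-2:ℝ) • h))))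
          + (T (exp (t • ((-2:ℝ) • h))) - e * star e * T (exp (t • ((-2:ℝ) • h))))
            * star (T (exp (t • h)) - e * star e * T (exp (t • h)))
            * (T (exp (t • h)) - e * star e * T (exp (t • h))) = 0 := fun t =>
      compress e _ _ hpi (hpq _) (hpq _) (keyP t)
    set τ := T h - e * star e * T h with hτ
    have hfd0 : HasDerivAt (fun s : ℝ => T (exp (s • h))) (T h) 0 := by
      simpa [expE0] using hTEd h 0
    have hX0d : HasDerivAt
        (fun s : ℝ => T (exp (s • h)) - e * star e * T (exp (s • h))) τ 0 :=
      hfd0.sub (leftMulDeriv (e * star e) hfd0)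
    have hX00 : T (exp ((0:ℝ) • h)) - e * star e * T (exp ((0:ℝ) • h)) = 0 := by
      rw [expE0, ← he, hpi, sub_self]
    have hgd0 : HasDerivAt (fun s : ℝ => T (exp (s • ((-2:ℝ) • h)))) ((-2:ℝ) • T h) 0 := by
      have h2 := hTEd ((-2:ℝ) • h) 0
      simp only [expE0, one_mul] at h2
      simpa [LinearMap.map_smul_of_tower] using h2
    have hY0d : HasDerivAt (fun s : ℝ =>
        T (exp (s • ((-2:ℝ) • h))) - e * star e * T (exp (s • ((-2:ℝ) • h))))
        ((-2:ℝ) • τ) 0 := by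
      have h2 := hgd0.sub (leftMulDeriv (e * star e) hgd0)
      have h3 : (-2:ℝ) • T h - e * star e * ((-2:ℝ) • T h) = (-2:ℝ) • τ := by
        rw [hτ, smul_sub, mul_smul_comm]
      rwa [h3] at h2
    have hY00 : T (exp ((0:ℝ) • ((-2:ℝ) • h)))
        - e * star e * T (exp ((0:ℝ) • ((-2:ℝ) • h))) = 0 := by
      rw [expE0, ← he, hpi, sub_self]
    have s1 := slopeTendsto hX0d hX00
    have s2 := slopeTendsto (starDeriv hX0d) (by rw [hX00, star_zero])
    have s3 := slopeTendsto hY0d hY00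
    have stot := ((s1.mul s2).mul s3).add ((s3.mul s2).mul s1)
    have hzerofun : (fun t : ℝ =>
        (t⁻¹ • (T (exp (t • h)) - e * star e * T (exp (t • h))))
          * (t⁻¹ • star (T (exp (t • h)) - e * star e * T (exp (t • h))))
          * (t⁻¹ • (T (exp (t • ((-2:ℝ) • h))) - e * star e * T (exp (t • ((-2:ℝ) • h)))))
        + (t⁻¹ • (T (exp (t • ((-2:ℝ) • h))) - e * star e * T (exp (t • ((-2:ℝ) • h)))))
          * (t⁻¹ • star (T (exp (t • h)) - e * star e * T (exp (t • h))))
          * (t⁻¹ • (T (exp (t • h)) - e * star e * T (exp (t • h)))))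
        = fun _ => (0:B) := by
      funext t
      simp only [smul_mul_assoc, mul_smul_comm, ← smul_add]
      rw [hcomp t]
      simp
    rw [hzerofun] at stot
    have hL := tendsto_nhds_unique stot tendsto_const_nhds
    have hL2 : ((-2:ℝ) + (-2:ℝ)) • (τ * star τ * τ) = 0 := by
      rw [add_smul]
      rw [← hL, mul_smul_comm, smul_mul_assoc, smul_mul_assoc]
    have h3 : τ * star τ * τ = 0 := by
      rcases smul_eq_zero.mp hL2 with h4 | h4
      · norm_num at h4
      · exact h4
    have hz2 : (τ * star τ) * (τ * star τ) = 0 := by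
      have hassoc : (τ * star τ) * (τ * star τ) = (τ * star τ * τ) * star τ := by noncomm_ring
      rw [hassoc, h3, zero_mul]
    have hzs : star (τ * star τ) = τ * star τ := by rw [star_mul, star_star]
    have hz : τ * star τ = 0 := by
      have hn : ‖τ * star τ‖ * ‖τ * star τ‖ = 0 := by
        rw [← CStarRing.norm_self_mul_star, hzs, hz2, norm_zero]
      rw [← norm_eq_zero]
      exact mul_self_eq_zero.mp hn
    have hτ0 : τ = 0 := (CStarRing.mul_star_self_eq_zero_iff τ).mp hz
    rw [hτ] at hτ0
    exact sub_eq_zero.mp hτ0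
  -- range in the Peirce 2 space, for all x
  have hP' : ∀ x : A, e * star e * T x = T x := by
    intro x
    have hh : star ((2:ℂ)⁻¹ • (x + star x)) = (2:ℂ)⁻¹ • (x + star x) := by
      rw [star_smul, star_add, star_star]
      congr 1
      · simp [Complex.star_def, map_inv₀]
      · rw [add_comm]
    have hksa : star ((-((2:ℂ)⁻¹ * Complex.I)) • (x - star x))
        = (-((2:ℂ)⁻¹ * Complex.I)) • (x - star x) := by
      rw [star_smul, star_sub, star_star]
      rw [show star (-((2:ℂ)⁻¹ * Complex.I)) = (2:ℂ)⁻¹ * Complex.I by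
        simp [Complex.star_def, map_inv₀]]
      rw [show ((2:ℂ)⁻¹ * Complex.I) • (star x - x)
          = (-((2:ℂ)⁻¹ * Complex.I)) • (x - star x) by rw [neg_smul, ← smul_neg, neg_sub]]
    have hdecomp : (2:ℂ)⁻¹ • (x + star x)
        + Complex.I • ((-((2:ℂ)⁻¹ * Complex.I)) • (x - star x)) = x := by
      rw [smul_smul]
      rw [show Complex.I * (-((2:ℂ)⁻¹ * Complex.I)) = (2:ℂ)⁻¹ by
        rw [show Complex.I * (-((2:ℂ)⁻¹ * Complex.I))
            = -((2:ℂ)⁻¹ * (Complex.I * Complex.I)) by ring, Complex.I_mul_I]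
        ring]
      rw [← smul_add]
      rw [show x + star x + (x - star x) = x + x by abel]
      exact halfsum x
    have h1 := hT0sa _ hh
    have h2 := hT0sa _ hksa
    calc e * star e * T x
        = e * star e * T ((2:ℂ)⁻¹ • (x + star x)
            + Complex.I • ((-((2:ℂ)⁻¹ * Complex.I)) • (x - star x))) := by rw [hdecomp]
      _ = e * star e * (T ((2:ℂ)⁻¹ • (x + star x))
            + Complex.I • T ((-((2:ℂ)⁻¹ * Complex.I)) • (x - star x))) := by
          simp only [map_add, map_smul]
      _ = e * star e * T ((2:ℂ)⁻¹ • (x + star x))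
            + Complex.I • (e * star e * T ((-((2:ℂ)⁻¹ * Complex.I)) • (x - star x))) := by
          rw [mul_add, mul_smul_comm]
      _ = T ((2:ℂ)⁻¹ • (x + star x))
            + Complex.I • T ((-((2:ℂ)⁻¹ * Complex.I)) • (x - star x)) := by
          rw [← h1, ← h2]
      _ = T x := by rw [← map_smul, ← map_add, hdecomp]
  have hQ' : ∀ x : A, T x * star e * e = T x := by
    intro x
    rw [mul_assoc, ← hpq x, hP' x]
  -- the *-property
  have hw : ∀ x : A, T x = e * star (T (star x)) * e := by
    intro x
    have h1 := hMd x
    rw [hQ' x] at h1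
    rw [hP' x] at h1
    exact two_cancel h1
  have c3 : ∀ x : A, T (star x) = e * star (T x) * e := by
    intro x
    have := hw (star x)
    rwa [star_star] at this
  -- the square identity
  have hsq : ∀ x : A, T (x * x) = T x * star e * T x := by
    intro x
    have keyJ : ∀ t : ℝ, (T (exp (t • x)) * star e * T (exp (t • (-x)))
        + T (exp (t • (-x))) * star e * T (exp (t • x))) = e + e := by
      intro t
      have hkey := hT (exp (t • x)) 1 (exp (t • (-x))) ?_
      · rw [trip, ← he] at hkey
        exact half_eq hkey
      · rw [trip, star_one]
        have p1 : exp (t • x) * 1 * exp (t • (-x)) = 1 := by rw [mul_one, expEmulneg]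
        have p2 : exp (t • (-x)) * 1 * exp (t • x) = 1 := by rw [mul_one, expEmulneg']
        rw [p1, p2]; exact halfsum 1
    have hS1 : ∀ t : ℝ,
        (T (exp (t • x) * x) * star e * T (exp (t • (-x)))
          + T (exp (t • x)) * star e * T (exp (t • (-x)) * (-x)))
        + (T (exp (t • (-x)) * (-x)) * star e * T (exp (t • x))
          + T (exp (t • (-x))) * star e * T (exp (t • x) * x)) = 0 := by
      intro t
      have h1 := mulDeriv (mulDeriv (hTEd x t) (hasDerivAt_const t (star e))) (hTEd (-x) t)
      have h2 := mulDeriv (mulDeriv (hTEd (-x) t) (hasDerivAt_const t (star e))) (hTEd x t)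
      have hval := constDeriv keyJ (h1.add h2)
      refine Eq.trans ?_ hval
      noncomm_ring
    have hfd0 : HasDerivAt (fun s : ℝ => T (exp (s • x))) (T x) 0 := by
      simpa [expE0] using hTEd x 0
    have hfd0n : HasDerivAt (fun s : ℝ => T (exp (s • (-x)))) (-T x) 0 := by
      simpa [expE0] using hTEd (-x) 0
    have c1 : HasDerivAt (fun s : ℝ => exp (s • x) * x) (x * x) 0 := by
      simpa [expE0] using (expEd x 0).mul_const x
    have c2 : HasDerivAt (fun s : ℝ => exp (s • (-x)) * (-x)) (x * x) 0 := by
      simpa [expE0, neg_mul_neg] using (expEd (-x) 0).mul_const (-x)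
    have φ1 : HasDerivAt (fun s : ℝ => T (exp (s • x) * x)) (T (x * x)) 0 :=
      (((⟨T, hcont⟩ : A →L[ℂ] B).restrictScalars ℝ).hasFDerivAt).comp_hasDerivAt 0 c1
    have φ2 : HasDerivAt (fun s : ℝ => T (exp (s • (-x)) * (-x))) (T (x * x)) 0 :=
      (((⟨T, hcont⟩ : A →L[ℂ] B).restrictScalars ℝ).hasFDerivAt).comp_hasDerivAt 0 c2
    have d1 := mulDeriv (mulDeriv φ1 (hasDerivAt_const (0:ℝ) (star e))) hfd0n
    have d2 := mulDeriv (mulDeriv hfd0 (hasDerivAt_const (0:ℝ) (star e))) φ2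
    have d3 := mulDeriv (mulDeriv φ2 (hasDerivAt_const (0:ℝ) (star e))) hfd0
    have d4 := mulDeriv (mulDeriv hfd0n (hasDerivAt_const (0:ℝ) (star e))) φ1
    have hval2 := constDeriv hS1 ((d1.add d2).add (d3.add d4))
    simp only [expE0, ← he, one_mul, mul_one, map_neg, neg_mul_neg] at hval2
    have h4 : (T (x*x) * star e * e + e * star e * T (x*x))
        + (T (x*x) * star e * e + e * star e * T (x*x))
        - ((T x * star e * T x + T x * star e * T x)
          + (T x * star e * T x + T x * star e * T x)) = 0 := by
      refine Eq.trans ?_ hval2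
      noncomm_ring
    rw [hQ' (x*x), hP' (x*x)] at h4
    exact four_cancel (sub_eq_zero.mp h4)
  -- polarization
  have hpol : ∀ a b : A, T (a * b + b * a) = T a * star e * T b + T b * star e * T a := by
    intro a b
    have harg : (a + b) * (a + b) = a * a + (a * b + b * a) + b * b := by noncomm_ring
    have h1 := hsq (a + b)
    rw [harg, map_add, map_add, map_add, hsq a, hsq b] at h1
    have h2 : T (a * b + b * a) = T (a + b) * star e * T (a + b)
        - T a * star e * T a - T b * star e * T b := by
      rw [map_add T (a * b) (b * a), ← h1]; abel
    rw [h2, map_add T a b]; noncomm_ring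
  -- the full triple identity
  have core : ∀ a b c : A, T (a * star b * c + c * star b * a)
      = T a * star (T b) * T c + T c * star (T b) * T a := by
    intro a b c
    have hJA : ((a * star b * c + c * star b * a) + (a * star b * c + c * star b * a))
        = ((a * (star b * c + c * star b) + (star b * c + c * star b) * a)
          + (c * (a * star b + star b * a) + (a * star b + star b * a) * c))
          - (star b * (a * c + c * a) + (a * c + c * a) * star b) := by
      noncomm_ring
    have hTw : T (star b * c + c * star b)
        = (e * star (T b) * e) * star e * T c + T c * star e * (e * star (T b) * e) := by
      rw [hpol (star b) c, c3 b]
    have hTv : T (a * star b + star b * a)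
        = T a * star e * (e * star (T b) * e) + (e * star (T b) * e) * star e * T a := by
      rw [hpol a (star b), c3 b]
    have hTy : T (a * c + c * a) = T a * star e * T c + T c * star e * T a := hpol a c
    have hW1 : T (a * (star b * c + c * star b) + (star b * c + c * star b) * a)
        = T a * star e * ((e * star (T b) * e) * star e * T c
            + T c * star e * (e * star (T b) * e))
          + ((e * star (T b) * e) * star e * T c
            + T c * star e * (e * star (T b) * e)) * star e * T a := by
      rw [hpol a (star b * c + c * star b), hTw]
    have hW2 : T (c * (a * star b + star b * a) + (a * star b + star b * a) * c)
        = T c * star e * (T a * star e * (e * star (T b) * e)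
            + (e * star (T b) * e) * star e * T a)
          + (T a * star e * (e * star (T b) * e)
            + (e * star (T b) * e) * star e * T a) * star e * T c := by
      rw [hpol c (a * star b + star b * a), hTv]
    have hW3 : T (star b * (a * c + c * a) + (a * c + c * a) * star b)
        = (e * star (T b) * e) * star e * (T a * star e * T c + T c * star e * T a)
          + (T a * star e * T c + T c * star e * T a) * star e * (e * star (T b) * e) := by
      rw [hpol (star b) (a * c + c * a), hTy, c3 b]
    have hTJ : T (a * star b * c + c * star b * a) + T (a * star b * c + c * star b * a)
        = (T a * star (T b) * T c + T c * star (T b) * T a)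
          + (T a * star (T b) * T c + T c * star (T b) * T a) := by
      calc T (a * star b * c + c * star b * a) + T (a * star b * c + c * star b * a)
          = T ((a * star b * c + c * star b * a) + (a * star b * c + c * star b * a)) :=
            (map_add T _ _).symm
        _ = T (((a * (star b * c + c * star b) + (star b * c + c * star b) * a)
              + (c * (a * star b + star b * a) + (a * star b + star b * a) * c))
              - (star b * (a * c + c * a) + (a * c + c * a) * star b)) := by rw [hJA]
        _ = T ((a * (star b * c + c * star b) + (star b * c + c * star b) * a)
              + (c * (a * star b + star b * a) + (a * star b + star b * a) * c))
              - T (star b * (a * c + c * a) + (a * c + c * a) * star b) := map_sub T _ _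
        _ = (T (a * (star b * c + c * star b) + (star b * c + c * star b) * a)
              + T (c * (a * star b + star b * a) + (a * star b + star b * a) * c))
              - T (star b * (a * c + c * a) + (a * c + c * a) * star b) := by
            rw [map_add T (a * (star b * c + c * star b) + (star b * c + c * star b) * a)
              (c * (a * star b + star b * a) + (a * star b + star b * a) * c)]
        _ = _ := by
            rw [hW1, hW2, hW3]
            exact jordan_triple e (T a) (T b) (T c) hpi (hQ' a) (hP' a) (hQ' c) (hP' c)
    exact two_cancel hTJ
  refine ⟨?_, hpi, c3, ?_⟩
  · intro a b c
    rw [trip, trip, map_smul, core]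
  · intro a b
    rw [map_smul, hpol]
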